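/- Let X = (X₁,X₂) ∈ ℝ² with X₁² + X₂² = 1 and X₂ ≠ 0, set θ = arctan(X₁/X₂), and for ζ₀ ∈ ℂ² set ζ = cos(θ/2)·ζ₀ + sin(θ/2)·(i·σ₃)·ζ₀. Then (X₁σ₁ + X₂σ₂)·ζ = ζ holds if and only if σ₂·ζ₀ = sign(X₂)·ζ₀. -/

import Mathlib

open Matrix Complex

noncomputable section

/-- Pauli matrix σ₁. -/
def σ1 : Matrix (Fin 2) (Fin 2) ℂ := !![0, 1; 1, 0]
/-- Pauli matrix σ₂. -/
def σ2 : Matrix (Fin 2) (Fin 2) ℂ := !![0, -I; I, 0]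
/-- Pauli matrix σ₃. -/
def σ3 : Matrix (Fin 2) (Fin 2) ℂ := !![1, 0; 0, -1]

/-- Let X ∈ ℝ² be a unit vector with X₂ ≠ 0, θ = arctan(X₁/X₂), and for ζ₀ ∈ ℂ² set
ζ = cos(θ/2)ζ₀ + sin(θ/2)(iσ₃)ζ₀. Then (X₁σ₁ + X₂σ₂)ζ = ζ if and only if
σ₂ζ₀ = sign(X₂)ζ₀. -/
theorem eigenvector_condition_on_constant_spinor (X1 X2 : ℝ)
    (hunit : X1 ^ 2 + X2 ^ 2 = 1) (hX2 : X2 ≠ 0) (ζ0 : Fin 2 → ℂ) :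
    let θ : ℝ := Real.arctan (X1 / X2)
    let ζ : Fin 2 → ℂ :=
      Real.cos (θ / 2) • ζ0 + Real.sin (θ / 2) • (I • σ3).mulVec ζ0
    (((X1 : ℂ) • σ1 + (X2 : ℂ) • σ2).mulVec ζ = ζ ↔
      σ2.mulVec ζ0 = (Real.sign X2 : ℂ) • ζ0) := by
  intro θ ζ
  -- real preliminaries
  set g : ℝ := Real.sign X2 with hgdef
  have rg : g * g = 1 := by
    rcases lt_or_gt_of_ne hX2 with h | h
    · simp [hgdef, Real.sign_of_neg h]
    · simp [hgdef, Real.sign_of_pos h]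
  have hgabs : g * X2 = |X2| := by
    rcases lt_or_gt_of_ne hX2 with h | h
    · simp [hgdef, Real.sign_of_neg h, abs_of_neg h]
    · simp [hgdef, Real.sign_of_pos h, abs_of_pos h]
  have habsne : |X2| ≠ 0 := abs_ne_zero.mpr hX2
  have hsq : 1 + (X1 / X2) ^ 2 = 1 / X2 ^ 2 := by
    field_simp
    linarith
  have hsqrt : Real.sqrt (1 + (X1 / X2) ^ 2) = 1 / |X2| := by
    rw [hsq, one_div, one_div, Real.sqrt_inv, Real.sqrt_sq_eq_abs]
  have hcosθ : Real.cos θ = g * X2 := by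
    rw [show θ = Real.arctan (X1 / X2) from rfl, Real.cos_arctan, hsqrt, hgabs,
      one_div_one_div]
  have hsinθ : Real.sin θ = X1 * g := by
    rw [show θ = Real.arctan (X1 / X2) from rfl, Real.sin_arctan, hsqrt]
    rw [div_div_eq_mul_div, mul_comm]
    rw [← hgabs]
    field_simp
  have hpyth : Real.sin (θ / 2) ^ 2 + Real.cos (θ / 2) ^ 2 = 1 :=
    Real.sin_sq_add_cos_sq (θ / 2)
  have hcos2 : Real.cos (θ / 2) ^ 2 - Real.sin (θ / 2) ^ 2 = g * X2 := by
    have h := Real.cos_two_mul (θ / 2)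
    rw [show 2 * (θ / 2) = θ by ring, hcosθ] at h
    linarith
  have hsin2 : 2 * Real.cos (θ / 2) * Real.sin (θ / 2) = X1 * g := by
    have h := Real.sin_two_mul (θ / 2)
    rw [show 2 * (θ / 2) = θ by ring, hsinθ] at h
    linarith [h, mul_comm (Real.sin (θ / 2)) (Real.cos (θ / 2))]
  -- complex versions
  have h1 : Complex.cos (↑θ / 2) ^ 2 + Complex.sin (↑θ / 2) ^ 2 = 1 := by
    have : ((Real.sin (θ / 2) ^ 2 + Real.cos (θ / 2) ^ 2 : ℝ) : ℂ) = ((1 : ℝ) : ℂ) := by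
      exact_mod_cast congrArg (fun x : ℝ => (x : ℂ)) hpyth
    push_cast at this
    linear_combination this
  have h2 : Complex.cos (↑θ / 2) ^ 2 - Complex.sin (↑θ / 2) ^ 2 = (g : ℂ) * (X2 : ℂ) := by
    have : ((Real.cos (θ / 2) ^ 2 - Real.sin (θ / 2) ^ 2 : ℝ) : ℂ) = ((g * X2 : ℝ) : ℂ) := by
      exact_mod_cast congrArg (fun x : ℝ => (x : ℂ)) hcos2
    push_cast at this
    linear_combination this
  have h3 : 2 * Complex.cos (↑θ / 2) * Complex.sin (↑θ / 2) = (X1 : ℂ) * (g : ℂ) := by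
    have : ((2 * Real.cos (θ / 2) * Real.sin (θ / 2) : ℝ) : ℂ) = ((X1 * g : ℝ) : ℂ) := by
      exact_mod_cast congrArg (fun x : ℝ => (x : ℂ)) hsin2
    push_cast at this
    linear_combination this
  have h4 : (X1 : ℂ) ^ 2 + (X2 : ℂ) ^ 2 = 1 := by exact_mod_cast hunit
  have h5 : (g : ℂ) * (g : ℂ) = 1 := by exact_mod_cast rg
  have hI : (I : ℂ) ^ 2 = -1 := Complex.I_sq
  set C : ℂ := Complex.cos (↑θ / 2) with hC
  set S : ℂ := Complex.sin (↑θ / 2) with hS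
  have hx1 : (X1 : ℂ) = 2 * C * S * (g : ℂ) := by
    linear_combination (-(g : ℂ)) * h3 - (X1 : ℂ) * h5
  have hx2 : (X2 : ℂ) = (g : ℂ) * (C ^ 2 - S ^ 2) := by
    linear_combination (-(g : ℂ)) * h2 - (X2 : ℂ) * h5
  set a : ℂ := ζ0 0 with ha
  set b : ℂ := ζ0 1 with hb
  constructor
  · intro h
    have e2 := congrFun h 1
    simp [ζ, σ1, σ2, σ3, Matrix.mulVec, dotProduct, Fin.sum_univ_two,
      Matrix.vecHead, Matrix.vecTail, ← hC, ← hS, ← ha, ← hb] at e2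
    -- e2 : (X1 + X2*I) * (C*a + S*(I*a)) = C*b + -(S*(I*b))
    have hBc : b = I * (g : ℂ) * a := by
      linear_combination (-(C + I * S)) * e2 + (I * (g:ℂ) * a) * h4 +
        (((X1:ℂ) + I * (X2:ℂ)) * a) * h2 + (I * ((X1:ℂ) + I * (X2:ℂ)) * a) * h3 +
        (-b) * h1 + (S ^ 2 * (X2:ℂ) * a * I + S ^ 2 * (X1:ℂ) * a + S ^ 2 * b
          + (g:ℂ) * (X1:ℂ) * (X2:ℂ) * a) * hI
    funext i
    fin_cases i <;>
      simp [σ2, Matrix.mulVec, dotProduct, Fin.sum_univ_two, Matrix.vecHead,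
        Matrix.vecTail, ← ha, ← hb, ← hgdef]
    · -- ⊢ -(I * b) = g * a
      linear_combination (-I) * hBc + (-((g:ℂ) * a)) * hI
    · -- ⊢ I * a = g * b
      linear_combination (-(g:ℂ)) * hBc + (-(I * a)) * h5
  · intro h
    have e0 := congrFun h 0
    have e1 := congrFun h 1
    simp [σ2, Matrix.mulVec, dotProduct, Fin.sum_univ_two, Matrix.vecHead,
      Matrix.vecTail, ← ha, ← hb, ← hgdef] at e0 e1
    -- e0 : -(I * b) = g * a ; e1 : I * a = g * b
    have hBc : b = I * (g : ℂ) * a := by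
      linear_combination I * e0 + b * hI
    funext i
    fin_cases i <;>
      simp [ζ, σ1, σ2, σ3, Matrix.mulVec, dotProduct, Fin.sum_univ_two,
        Matrix.vecHead, Matrix.vecTail, ← hC, ← hS, ← ha, ← hb]
    · -- E1 : (X1 - X2*I)*(C*b - S*(I*b)) = C*a + S*(I*a)
      linear_combination (S * (X2:ℂ) * b - C * (g:ℂ) ^ 2 * a) * hI +
        (C * a + S * a * I) * h5 + (-(S * b * I) + C * b) * hx1 +
        (-(C * b * I) - S * b) * hx2 + (-(C * (g:ℂ) * b * I) + S * (g:ℂ) * b) * h1 +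
        (-(C * (g:ℂ) * I) + S * (g:ℂ)) * hBc
    · -- E2
      linear_combination (S * (X2:ℂ) * a + S * (g:ℂ) * a) * hI +
        (S * a * I + C * a) * hx1 + (C * a * I - S * a) * hx2 +
        (C * (g:ℂ) * a * I + S * (g:ℂ) * a) * h1 + (S * I - C) * hBc
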